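/- arXiv:2512.11963 — 8 statements merged into one kernel-verified Lean document; each statement's English description precedes it below -/
import Mathlib

section
/- Let M ≥ 2 and let R : Fin M → Matrix (Fin n) (Fin n) ℝ. Suppose that for every Ω ∈ Matrix.orthogonalGroup (Fin M) ℝ with det Ω = 1 there exists Q ∈ Matrix.orthogonalGroup (Fin n) ℝ such that Qᵀ * (R m) * Q = ∑ k, (Ω m k) • R k for every m. Then for any two unit vectors φ φ' : Fin M → ℝ (i.e. ∑ m, (φ m)² = 1 and ∑ m, (φ' m)² = 1), the matrices ∑ m, (φ m) • R m and ∑ m, (φ' m) • R m have the same characteristic polynomial. -/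
open Matrix Polynomial

noncomputable def hhRefl {M : ℕ} (v : Fin M → ℝ) : Matrix (Fin M) (Fin M) ℝ :=
  1 - (2 / (v ⬝ᵥ v)) • vecMulVec v v

lemma hhRefl_transpose {M : ℕ} (v : Fin M → ℝ) : (hhRefl v)ᵀ = hhRefl v := by
  unfold hhRefl
  rw [transpose_sub, transpose_one, transpose_smul]
  congr 1
  ext i j
  simp [vecMulVec_apply, mul_comm]

lemma vecMulVec_mul_self {M : ℕ} (v : Fin M → ℝ) :
    vecMulVec v v * vecMulVec v v = (v ⬝ᵥ v) • vecMulVec v v := by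
  ext i j
  simp only [Matrix.mul_apply, vecMulVec_apply, Matrix.smul_apply, dotProduct, smul_eq_mul,
    Finset.sum_mul]
  exact Finset.sum_congr rfl fun k _ => by ring

lemma hhRefl_mul_self {M : ℕ} {v : Fin M → ℝ} (hv : v ⬝ᵥ v ≠ 0) :
    hhRefl v * hhRefl v = 1 := by
  unfold hhRefl
  simp only [sub_mul, mul_sub, one_mul, mul_one, Matrix.smul_mul, Matrix.mul_smul,
    smul_smul, vecMulVec_mul_self]
  have : 2 / (v ⬝ᵥ v) * (2 / (v ⬝ᵥ v) * (v ⬝ᵥ v)) = 2 / (v ⬝ᵥ v) + 2 / (v ⬝ᵥ v) := by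
    field_simp; ring
  rw [this]
  module

lemma hhRefl_mulVec {M : ℕ} (v x : Fin M → ℝ) :
    hhRefl v *ᵥ x = x - (2 / (v ⬝ᵥ v) * (v ⬝ᵥ x)) • v := by
  unfold hhRefl
  rw [sub_mulVec, one_mulVec, smul_mulVec]
  congr 1
  ext i
  simp only [mulVec, dotProduct, vecMulVec_apply, Pi.smul_apply, smul_eq_mul, Finset.mul_sum,
    Finset.sum_mul]
  exact Finset.sum_congr rfl fun k _ => by ring

lemma hhRefl_det {M : ℕ} {v : Fin M → ℝ} (hv : v ⬝ᵥ v ≠ 0) :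
    (hhRefl v).det = -1 := by
  have h1 : hhRefl v = 1 + replicateCol Unit ((-(2 / (v ⬝ᵥ v))) • v) * replicateRow Unit v := by
    unfold hhRefl
    rw [← vecMulVec_eq, sub_eq_add_neg]
    congr 1
    ext i j
    simp [vecMulVec_apply]; ring
  rw [h1, det_one_add_replicateCol_mul_replicateRow, dotProduct_smul, smul_eq_mul]
  field_simp; ring

lemma charpoly_conj_of_transpose {n : ℕ} (A Q : Matrix (Fin n) (Fin n) ℝ)
    (hQ : Qᵀ * Q = 1) : (Qᵀ * A * Q).charpoly = A.charpoly := by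
  have hmap : (Qᵀ.map C) * (Q.map C) = 1 := by
    rw [← Matrix.map_mul, hQ, Matrix.map_one _ (map_zero C) (map_one C)]
  have key : charmatrix (Qᵀ * A * Q) = (Qᵀ.map C) * charmatrix A * (Q.map C) := by
    unfold charmatrix
    rw [mul_sub, sub_mul]
    congr 1
    · rw [scalar_apply, ← smul_one_eq_diagonal, Matrix.mul_smul, Matrix.smul_mul, mul_one,
        hmap]
    · simp only [RingHom.mapMatrix_apply]
      rw [← Matrix.map_mul, ← Matrix.map_mul]
  have hdet : (Qᵀ.map C).det * (Q.map C).det = 1 := by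
    rw [← det_mul, hmap, det_one]
  rw [Matrix.charpoly, Matrix.charpoly, key, det_mul, det_mul]
  calc (Qᵀ.map C).det * (charmatrix A).det * (Q.map C).det
      = (Qᵀ.map C).det * (Q.map C).det * (charmatrix A).det := by ring
    _ = (charmatrix A).det := by rw [hdet, one_mul]

lemma star_eq_transpose_real {k : ℕ} (A : Matrix (Fin k) (Fin k) ℝ) : star A = Aᵀ := by
  ext i j
  simp [Matrix.star_apply]

/-- Lemma 2.2 of the paper: if the `SO(M)` symmetry rotating the scalars is unbroken
(for every special orthogonal `Ω` there is an orthogonal `Q` compensating it), then all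
normalized linear combinations `∑ m, φ m • R m` of the Yukawa matrices have the same
spectrum, i.e. the same characteristic polynomial. -/
theorem same_spectrum_of_SO_unbroken (n M : ℕ) (hM : 2 ≤ M)
    (R : Fin M → Matrix (Fin n) (Fin n) ℝ)
    (h : ∀ Ω ∈ Matrix.orthogonalGroup (Fin M) ℝ, Ω.det = 1 →
      ∃ Q ∈ Matrix.orthogonalGroup (Fin n) ℝ,
        ∀ m : Fin M, Qᵀ * R m * Q = ∑ k : Fin M, (Ω m k) • R k)
    (φ φ' : Fin M → ℝ)
    (hφ : ∑ m : Fin M, (φ m) ^ 2 = 1) (hφ' : ∑ m : Fin M, (φ' m) ^ 2 = 1) :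
    (∑ m : Fin M, (φ m) • R m).charpoly = (∑ m : Fin M, (φ' m) • R m).charpoly := by
  by_cases hφφ' : φ = φ'
  · rw [hφφ']
  -- dot product facts
  have h1 : φ ⬝ᵥ φ = 1 := by simpa [dotProduct, pow_two] using hφ
  have h1' : φ' ⬝ᵥ φ' = 1 := by simpa [dotProduct, pow_two] using hφ'
  set v : Fin M → ℝ := φ - φ' with hvdef
  have hvne : v ≠ 0 := sub_ne_zero.mpr hφφ'
  have hv : v ⬝ᵥ v ≠ 0 := fun hc => hvne (dotProduct_self_eq_zero.mp hc)
  -- a nonzero vector orthogonal to φ'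
  obtain ⟨w, hwker, hwne⟩ : ∃ w : Fin M → ℝ, w ⬝ᵥ φ' = 0 ∧ w ≠ 0 := by
    let f : (Fin M → ℝ) →ₗ[ℝ] ℝ :=
      { toFun := fun x => x ⬝ᵥ φ'
        map_add' := fun x y => add_dotProduct x y φ'
        map_smul' := fun c x => smul_dotProduct c x φ' }
    have hker : LinearMap.ker f ≠ ⊥ := by
      intro hbot
      have hinj : Function.Injective f := LinearMap.ker_eq_bot.mp hbot
      have := LinearMap.finrank_le_finrank_of_injective hinj
      rw [Module.finrank_fin_fun, Module.finrank_self] at this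
      omega
    obtain ⟨w, hw1, hw2⟩ := (Submodule.ne_bot_iff _).mp hker
    exact ⟨w, LinearMap.mem_ker.mp hw1, hw2⟩
  have hw : w ⬝ᵥ w ≠ 0 := fun hc => hwne (dotProduct_self_eq_zero.mp hc)
  set Ω : Matrix (Fin M) (Fin M) ℝ := hhRefl v * hhRefl w with hΩdef
  have hΩT : Ωᵀ = hhRefl w * hhRefl v := by
    rw [hΩdef, transpose_mul, hhRefl_transpose, hhRefl_transpose]
  have hΩTΩ : Ωᵀ * Ω = 1 := by
    rw [hΩT, hΩdef, mul_assoc, ← mul_assoc (hhRefl v), hhRefl_mul_self hv, one_mul,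
      hhRefl_mul_self hw]
  have hΩmem : Ω ∈ Matrix.orthogonalGroup (Fin M) ℝ := by
    rw [Matrix.mem_orthogonalGroup_iff']
    exact hΩTΩ
  have hΩdet : Ω.det = 1 := by
    rw [hΩdef, det_mul, hhRefl_det hv, hhRefl_det hw]; norm_num
  -- Ωᵀ *ᵥ φ = φ'
  have hvφ : hhRefl v *ᵥ φ = φ' := by
    have h2 : v ⬝ᵥ v = 2 * (v ⬝ᵥ φ) := by
      rw [hvdef]
      rw [sub_dotProduct, sub_dotProduct, dotProduct_sub, dotProduct_sub, h1, h1',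
        dotProduct_comm φ' φ]
      ring
    have hvφne : v ⬝ᵥ φ ≠ 0 := by
      intro hc; rw [hc, mul_zero] at h2; exact hv h2
    have hc : 2 / (v ⬝ᵥ v) * (v ⬝ᵥ φ) = 1 := by
      rw [h2]; field_simp
    rw [hhRefl_mulVec, hc, one_smul, hvdef, sub_sub_cancel]
  have hwφ' : hhRefl w *ᵥ φ' = φ' := by
    rw [hhRefl_mulVec, hwker, mul_zero, zero_smul, sub_zero]
  have hΩφ : Ωᵀ *ᵥ φ = φ' := by
    rw [hΩT, ← mulVec_mulVec, hvφ, hwφ']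
  -- apply the hypothesis
  obtain ⟨Q, hQmem, hQ⟩ := h Ω hΩmem hΩdet
  have hQTQ : Qᵀ * Q = 1 := by
    have := hQmem.1
    rwa [star_eq_transpose_real] at this
  have hcoef : ∀ k, (∑ m, φ m * Ω m k) = φ' k := by
    intro k
    have := congrFun hΩφ k
    simpa [mulVec, dotProduct, transpose_apply, mul_comm] using this
  have key : Qᵀ * (∑ m : Fin M, (φ m) • R m) * Q = ∑ m : Fin M, (φ' m) • R m := by
    calc Qᵀ * (∑ m : Fin M, (φ m) • R m) * Q
        = ∑ m : Fin M, φ m • (Qᵀ * R m * Q) := by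
          rw [Matrix.mul_sum, Matrix.sum_mul]
          exact Finset.sum_congr rfl fun m _ => by
            rw [Matrix.mul_smul, Matrix.smul_mul]
      _ = ∑ m : Fin M, φ m • ∑ k : Fin M, (Ω m k) • R k := by
          exact Finset.sum_congr rfl fun m _ => by rw [hQ m]
      _ = ∑ k : Fin M, (∑ m : Fin M, φ m * Ω m k) • R k := by
          simp only [Finset.smul_sum, smul_smul]
          rw [Finset.sum_comm]
          exact Finset.sum_congr rfl fun k _ => by rw [Finset.sum_smul]
      _ = ∑ m : Fin M, (φ' m) • R m := by
          exact Finset.sum_congr rfl fun k _ => by rw [hcoef k]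
  rw [← key, charpoly_conj_of_transpose _ _ hQTQ]
end

section
/- Let R ∈ Matrix (Fin n) (Fin n) ℝ be symmetric (Rᵀ = R). Then there exists Q ∈ Matrix.orthogonalGroup (Fin n) ℝ with Qᵀ * R * Q = −R if and only if the characteristic polynomial of R equals the characteristic polynomial of −R. -/
open Matrix Polynomial

private lemma charpoly_conj_orth {n : ℕ} (Q A : Matrix (Fin n) (Fin n) ℝ)
    (hQ : Qᵀ * Q = 1) (hQ' : Q * Qᵀ = 1) :
    (Qᵀ * A * Q).charpoly = A.charpoly := by
  have hmapC : ∀ M N : Matrix (Fin n) (Fin n) ℝ,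
      (M * N).map (C : ℝ →+* ℝ[X]) = M.map C * N.map C := fun M N => by
    simpa using (RingHom.mapMatrix (C : ℝ →+* ℝ[X])).map_mul M N
  have h1 : (Q.map (C : ℝ →+* ℝ[X]))ᵀ * Q.map C = 1 := by
    rw [← Matrix.transpose_map, ← hmapC, hQ]
    simp
  have key : charmatrix (Qᵀ * A * Q) = (Q.map C)ᵀ * charmatrix A * Q.map C := by
    have hsc : (Q.map C)ᵀ * Matrix.scalar (Fin n) (X : ℝ[X]) * Q.map C
        = Matrix.scalar (Fin n) (X : ℝ[X]) := by
      rw [(Matrix.scalar_commute (X : ℝ[X]) (fun r => Commute.all _ _)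
        ((Q.map C)ᵀ)).symm.eq, mul_assoc, h1, mul_one]
    rw [charmatrix, charmatrix, mul_sub, sub_mul, hsc]
    congr 1
    simp only [RingHom.mapMatrix_apply]
    rw [← Matrix.transpose_map, ← hmapC, ← hmapC]
  rw [Matrix.charpoly, Matrix.charpoly, key, det_mul, det_mul]
  have h2 : ((Q.map (C : ℝ →+* ℝ[X]))ᵀ).det * (Q.map C).det = 1 := by
    rw [← det_mul, h1, det_one]
  calc ((Q.map C)ᵀ).det * (charmatrix A).det * (Q.map C).det
      = ((Q.map (C : ℝ →+* ℝ[X]))ᵀ).det * (Q.map C).det * (charmatrix A).det := by ring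
    _ = (charmatrix A).det := by rw [h2, one_mul]

private lemma charpoly_diagonal' {n : ℕ} (d : Fin n → ℝ) :
    (Matrix.diagonal d).charpoly = ∏ i, (X - C (d i)) := by
  have h : charmatrix (Matrix.diagonal d) = Matrix.diagonal fun i => (X : ℝ[X]) - C (d i) := by
    ext i j
    by_cases h : i = j
    · subst h; simp [charmatrix_apply_eq]
    · simp [charmatrix_apply_ne _ _ _ h, Matrix.diagonal_apply_ne _ h]
  rw [Matrix.charpoly, h, det_diagonal]

private lemma exists_perm_of_multiset_eq {n : ℕ} {a b : Fin n → ℝ}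
    (h : Multiset.map a Finset.univ.val = Multiset.map b Finset.univ.val) :
    ∃ σ : Equiv.Perm (Fin n), a ∘ σ = b := by
  have hco : ∀ f : Fin n → ℝ, Multiset.map f Finset.univ.val = ↑(List.ofFn f) := by
    intro f
    rw [List.ofFn_eq_map, ← Multiset.map_coe]
    congr 1
  have hperm : (List.ofFn a).Perm (List.ofFn b) := by
    rw [← Multiset.coe_eq_coe, ← hco, ← hco, h]
  set σa := Tuple.sort a
  set σb := Tuple.sort b
  have hsorted : List.ofFn (a ∘ σa) = List.ofFn (b ∘ σb) :=
    List.Perm.eq_of_sortedLE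
      (Tuple.monotone_sort a).sortedLE_ofFn (Tuple.monotone_sort b).sortedLE_ofFn
      ((σa.ofFn_comp_perm a).trans (hperm.trans (σb.ofFn_comp_perm b).symm))
  have heq : a ∘ σa = b ∘ σb := List.ofFn_injective hsorted
  refine ⟨σb.symm.trans σa, ?_⟩
  funext i
  have := congrFun heq (σb.symm i)
  simpa using this

/-- The `M = 1` case of Lemma 2.4 of the paper: for a real symmetric matrix `R`, there
is an orthogonal matrix `Q` with `Qᵀ * R * Q = -R` if and only if the spectrum of `R`
is symmetric about `0`, i.e. `R` and `-R` have the same characteristic polynomial. -/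
theorem orthogonal_conj_neg_iff_charpoly_symm (n : ℕ)
    (R : Matrix (Fin n) (Fin n) ℝ) (hR : Rᵀ = R) :
    (∃ Q ∈ Matrix.orthogonalGroup (Fin n) ℝ, Qᵀ * R * Q = -R) ↔
      R.charpoly = (-R).charpoly := by
  constructor
  · rintro ⟨Q, hQmem, hQ⟩
    have h1 : Q * Qᵀ = 1 := by
      have := (Matrix.mem_orthogonalGroup_iff (Fin n) ℝ).mp hQmem
      exact this
    have h2 : Qᵀ * Q = 1 := by
      have := (Matrix.mem_orthogonalGroup_iff' (Fin n) ℝ).mp hQmem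
      exact this
    rw [← hQ]
    exact (charpoly_conj_orth Q R h2 h1).symm
  · intro hcp
    have hA : R.IsHermitian := by
      rw [Matrix.IsHermitian, Matrix.conjTranspose_eq_transpose_of_trivial, hR]
    have hB : (-R).IsHermitian := hA.neg
    set a := hA.eigenvalues with ha_def
    set b := hB.eigenvalues with hb_def
    have hAd : (RCLike.ofReal ∘ a : Fin n → ℝ) = a := by
      funext i; simp [RCLike.ofReal_real_eq_id]
    have hBd : (RCLike.ofReal ∘ b : Fin n → ℝ) = b := by
      funext i; simp [RCLike.ofReal_real_eq_id]
    set U := (hA.eigenvectorUnitary : Matrix (Fin n) (Fin n) ℝ) with hU_def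
    set V := (hB.eigenvectorUnitary : Matrix (Fin n) (Fin n) ℝ) with hV_def
    have hU : star U * R * U = Matrix.diagonal a := by
      rw [hU_def, ← Unitary.conjStarAlgAut_star_apply (S := ℝ), hA.conjStarAlgAut_star_eigenvectorUnitary, hAd]
    have hV : star V * (-R) * V = Matrix.diagonal b := by
      rw [hV_def, ← Unitary.conjStarAlgAut_star_apply (S := ℝ), hB.conjStarAlgAut_star_eigenvectorUnitary, hBd]
    have hUmem : U ∈ Matrix.unitaryGroup (Fin n) ℝ := hA.eigenvectorUnitary.2
    have hVmem : V ∈ Matrix.unitaryGroup (Fin n) ℝ := hB.eigenvectorUnitary.2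
    have hUt : Uᵀ * U = 1 := by
      have := (Matrix.mem_unitaryGroup_iff').mp hUmem
      rwa [Matrix.star_eq_conjTranspose, Matrix.conjTranspose_eq_transpose_of_trivial] at this
    have hUt' : U * Uᵀ = 1 := by
      have := (Matrix.mem_unitaryGroup_iff).mp hUmem
      rwa [Matrix.star_eq_conjTranspose, Matrix.conjTranspose_eq_transpose_of_trivial] at this
    have hVt : Vᵀ * V = 1 := by
      have := (Matrix.mem_unitaryGroup_iff').mp hVmem
      rwa [Matrix.star_eq_conjTranspose, Matrix.conjTranspose_eq_transpose_of_trivial] at this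
    have hVt' : V * Vᵀ = 1 := by
      have := (Matrix.mem_unitaryGroup_iff).mp hVmem
      rwa [Matrix.star_eq_conjTranspose, Matrix.conjTranspose_eq_transpose_of_trivial] at this
    have hstarU : star U = Uᵀ := by
      rw [Matrix.star_eq_conjTranspose, Matrix.conjTranspose_eq_transpose_of_trivial]
    have hstarV : star V = Vᵀ := by
      rw [Matrix.star_eq_conjTranspose, Matrix.conjTranspose_eq_transpose_of_trivial]
    have hcpA : R.charpoly = ∏ i, (X - C (a i)) := by
      rw [← charpoly_diagonal' a, ← hU, hstarU]
      exact (charpoly_conj_orth U R hUt hUt').symm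
    have hcpB : (-R).charpoly = ∏ i, (X - C (b i)) := by
      rw [← charpoly_diagonal' b, ← hV, hstarV]
      exact (charpoly_conj_orth V (-R) hVt hVt').symm
    have hprod : ∏ i, (X - C (a i)) = ∏ i, ((X : ℝ[X]) - C (b i)) := by
      rw [← hcpA, ← hcpB, hcp]
    have hmult : Multiset.map a Finset.univ.val = Multiset.map b Finset.univ.val := by
      have hra := Polynomial.roots_multiset_prod_X_sub_C (Multiset.map a Finset.univ.val)
      have hrb := Polynomial.roots_multiset_prod_X_sub_C (Multiset.map b Finset.univ.val)
      rw [← hra, ← hrb]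
      congr 1
      rw [Multiset.map_map, Multiset.map_map]
      simpa [Finset.prod_eq_multiset_prod] using hprod
    obtain ⟨σ, hσ⟩ := exists_perm_of_multiset_eq hmult
    set P := (σ.toPEquiv.toMatrix : Matrix (Fin n) (Fin n) ℝ) with hP_def
    have hPt : Pᵀ = (σ.symm.toPEquiv.toMatrix : Matrix (Fin n) (Fin n) ℝ) := by
      rw [hP_def, Equiv.toPEquiv_symm, PEquiv.toMatrix_symm]
    have hPP : P * Pᵀ = 1 := by
      rw [hPt, hP_def, ← PEquiv.toMatrix_trans, ← Equiv.toPEquiv_trans]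
      simp
    have hPP' : Pᵀ * P = 1 := by
      rw [hPt, hP_def, ← PEquiv.toMatrix_trans, ← Equiv.toPEquiv_trans]
      simp
    have hdiag : P * Matrix.diagonal a * Pᵀ = Matrix.diagonal b := by
      rw [hP_def, PEquiv.toMatrix_toPEquiv_mul, hPt, PEquiv.mul_toMatrix_toPEquiv]
      ext i j
      simp only [Matrix.submatrix_apply, Equiv.symm_symm, id]
      by_cases h : i = j
      · subst h
        simp [Matrix.diagonal_apply_eq, ← hσ]
      · rw [Matrix.diagonal_apply_ne _ h,
          Matrix.diagonal_apply_ne _ (fun hc => h (σ.injective hc))]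
    refine ⟨U * Pᵀ * Vᵀ, ?_, ?_⟩
    · have hPtmem : Pᵀ ∈ Matrix.orthogonalGroup (Fin n) ℝ := by
        rw [Matrix.mem_orthogonalGroup_iff, Matrix.transpose_transpose]
        exact hPP'
      have hVtmem : Vᵀ ∈ Matrix.orthogonalGroup (Fin n) ℝ := by
        rw [Matrix.mem_orthogonalGroup_iff, Matrix.transpose_transpose]
        exact hVt
      exact mul_mem (mul_mem hUmem hPtmem) hVtmem
    · have hQt : (U * Pᵀ * Vᵀ)ᵀ = V * P * Uᵀ := by
        rw [Matrix.transpose_mul, Matrix.transpose_mul, Matrix.transpose_transpose,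
          Matrix.transpose_transpose, mul_assoc]
      rw [hQt]
      have hRdec : Uᵀ * R * U = Matrix.diagonal a := by rw [← hstarU]; exact hU
      have step1 : V * P * Uᵀ * R * (U * Pᵀ * Vᵀ)
          = V * (P * (Uᵀ * R * U) * Pᵀ) * Vᵀ := by
        simp only [Matrix.mul_assoc]
      rw [step1, hRdec, hdiag]
      have step2 : V * Matrix.diagonal b * Vᵀ = V * (Vᵀ * (-R) * V) * Vᵀ := by
        rw [← hV, hstarV]
      rw [step2]
      have step3 : V * (Vᵀ * (-R) * V) * Vᵀ = (V * Vᵀ) * (-R) * (V * Vᵀ) := by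
        simp only [Matrix.mul_assoc]
      rw [step3, hVt', one_mul, mul_one]
end

section
/- For every family R : Fin M → Matrix (Fin n) (Fin n) ℝ, the set 𝔤(R) = {(X, ω) ∈ Matrix (Fin n) (Fin n) ℝ × Matrix (Fin M) (Fin M) ℝ : Xᵀ = −X, ωᵀ = −ω, and (R m) * X − X * (R m) = ∑ k, (ω m k) • R k for all m : Fin M} is a Lie subalgebra of the product with componentwise commutator bracket: it contains (0, 0), is closed under addition and real scalar multiplication, and is closed under the bracket [(X₁, ω₁), (X₂, ω₂)] = (X₁X₂ − X₂X₁, ω₁ω₂ − ω₂ω₁). -/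
open Matrix

/-- The Lie algebra `𝔤(R)` (equation 2.20 of the paper) corresponding to the connected
part of the symmetry group `G(R)` of a GNY-like model. -/
def gAlg (n M : ℕ) (R : Fin M → Matrix (Fin n) (Fin n) ℝ) :
    Set (Matrix (Fin n) (Fin n) ℝ × Matrix (Fin M) (Fin M) ℝ) :=
  {p | p.1ᵀ = -p.1 ∧ p.2ᵀ = -p.2 ∧
    ∀ m : Fin M, R m * p.1 - p.1 * R m = ∑ k : Fin M, (p.2 m k) • R k}

/-- `𝔤(R)` is a Lie subalgebra of `𝔰𝔬(n) ⊕ 𝔰𝔬(M)` with the componentwise commutator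
bracket: it contains `(0, 0)`, is closed under addition and real scalar multiplication,
and is closed under the bracket
`[(X₁, ω₁), (X₂, ω₂)] = (X₁X₂ - X₂X₁, ω₁ω₂ - ω₂ω₁)`. -/
theorem gAlg_is_lie_subalgebra (n M : ℕ) (R : Fin M → Matrix (Fin n) (Fin n) ℝ) :
    ((0, 0) : Matrix (Fin n) (Fin n) ℝ × Matrix (Fin M) (Fin M) ℝ) ∈ gAlg n M R ∧
    (∀ p q, p ∈ gAlg n M R → q ∈ gAlg n M R → p + q ∈ gAlg n M R) ∧
    (∀ (c : ℝ) p, p ∈ gAlg n M R → c • p ∈ gAlg n M R) ∧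
    (∀ p q, p ∈ gAlg n M R → q ∈ gAlg n M R →
      (p.1 * q.1 - q.1 * p.1, p.2 * q.2 - q.2 * p.2) ∈ gAlg n M R) := by
  refine ⟨⟨by simp, by simp, fun m => by simp⟩, ?_, ?_, ?_⟩
  · rintro ⟨X1, w1⟩ ⟨X2, w2⟩ ⟨h1, h2, h3⟩ ⟨g1, g2, g3⟩
    refine ⟨?_, ?_, fun m => ?_⟩
    · simp only [Prod.fst_add, transpose_add, h1, g1, neg_add]
    · simp only [Prod.snd_add, transpose_add, h2, g2, neg_add]
    · simp only [Prod.fst_add, Prod.snd_add]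
      have : R m * (X1 + X2) - (X1 + X2) * R m
          = (R m * X1 - X1 * R m) + (R m * X2 - X2 * R m) := by noncomm_ring
      rw [this, h3 m, g3 m, ← Finset.sum_add_distrib]
      exact Finset.sum_congr rfl fun k _ => by simp [Matrix.add_apply, add_smul]
  · rintro c ⟨X, w⟩ ⟨h1, h2, h3⟩
    refine ⟨?_, ?_, fun m => ?_⟩
    · simp [transpose_smul, h1]
    · simp [transpose_smul, h2]
    · simp only [Prod.smul_fst, Prod.smul_snd]
      have : R m * (c • X) - (c • X) * R m = c • (R m * X - X * R m) := by
        simp [mul_smul_comm, smul_mul_assoc, smul_sub]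
      rw [this, h3 m, Finset.smul_sum]
      exact Finset.sum_congr rfl fun k _ => by simp [Matrix.smul_apply, smul_smul]
  · rintro ⟨X1, w1⟩ ⟨X2, w2⟩ ⟨h1, h2, h3⟩ ⟨g1, g2, g3⟩
    refine ⟨?_, ?_, fun m => ?_⟩
    · simp only [transpose_sub, transpose_mul, h1, g1]
      noncomm_ring
    · simp only [transpose_sub, transpose_mul, h2, g2]
      noncomm_ring
    · simp only
      have key : R m * (X1 * X2 - X2 * X1) - (X1 * X2 - X2 * X1) * R m
          = ((R m * X1 - X1 * R m) * X2 - X2 * (R m * X1 - X1 * R m))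
            + (X1 * (R m * X2 - X2 * R m) - (R m * X2 - X2 * R m) * X1) := by
        noncomm_ring
      rw [key, h3 m, g3 m]
      have e1 : (∑ k : Fin M, w1 m k • R k) * X2 - X2 * ∑ k : Fin M, w1 m k • R k
          = ∑ k : Fin M, ∑ j : Fin M, (w1 m k * w2 k j) • R j := by
        rw [Finset.sum_mul, Finset.mul_sum, ← Finset.sum_sub_distrib]
        refine Finset.sum_congr rfl fun k _ => ?_
        rw [smul_mul_assoc, mul_smul_comm, ← smul_sub, g3 k, Finset.smul_sum]
        exact Finset.sum_congr rfl fun j _ => by rw [smul_smul]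
      have e2 : X1 * (∑ k : Fin M, w2 m k • R k) - (∑ k : Fin M, w2 m k • R k) * X1
          = -∑ k : Fin M, ∑ j : Fin M, (w2 m k * w1 k j) • R j := by
        rw [Finset.sum_mul, Finset.mul_sum, ← Finset.sum_sub_distrib, ← Finset.sum_neg_distrib]
        refine Finset.sum_congr rfl fun k _ => ?_
        rw [smul_mul_assoc, mul_smul_comm, ← smul_sub, ← neg_sub, smul_neg, neg_inj,
          h3 k, Finset.smul_sum]
        exact Finset.sum_congr rfl fun j _ => by rw [smul_smul]
      rw [e1, e2, Finset.sum_comm (f := fun k j => (w1 m k * w2 k j) • R j),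
        Finset.sum_comm (f := fun k j => (w2 m k * w1 k j) • R j)]
      rw [← sub_eq_add_neg, ← Finset.sum_sub_distrib]
      refine Finset.sum_congr rfl fun j _ => ?_
      rw [← Finset.sum_smul, ← Finset.sum_smul, ← sub_smul]
      simp [Matrix.sub_apply, Matrix.mul_apply]
end

section
/- Let N : ℕ with N ≥ 1 and let ε > 0 be real. Set g = Real.sqrt (16·π²·ε / (4·N + 6)). Then g > 0 and −(1/2)·g·ε + (6·g³ + 4·N·g³)/(32·π²) = 0, and there exists a unique λ > 0 such that −λ·ε + (8·N·g²·(λ − 24·g²) + 3·λ²)/(16·π²) = 0. -/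
open Real

/-- The one-loop perturbative fixed point of the `M = 1` GNY-like model with all four
Yukawa couplings equal (equations 3.1–3.2 of the paper): with
`g = √(16π²ε/(4N + 6))` one has `g > 0`, the one-loop Yukawa beta function
`-(1/2)gε + (6g³ + 4N g³)/(32π²)` vanishes, and there is a unique `λ > 0` at which the
one-loop quartic beta function `-λε + (8N g²(λ - 24g²) + 3λ²)/(16π²)` vanishes. -/
theorem gny_one_loop_fixed_point (N : ℕ) (hN : 1 ≤ N) (ε : ℝ) (hε : 0 < ε) :
    let g : ℝ := Real.sqrt (16 * π ^ 2 * ε / (4 * N + 6))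
    0 < g ∧
    -(1 / 2) * g * ε + (6 * g ^ 3 + 4 * N * g ^ 3) / (32 * π ^ 2) = 0 ∧
    (∃! l : ℝ, 0 < l ∧
      -l * ε + (8 * N * g ^ 2 * (l - 24 * g ^ 2) + 3 * l ^ 2) / (16 * π ^ 2) = 0) := by
  intro g
  have hπ : (0:ℝ) < π := Real.pi_pos
  have hπ2 : (0:ℝ) < π ^ 2 := by positivity
  have hN1 : (1:ℝ) ≤ (N:ℝ) := by exact_mod_cast hN
  have hD : (0:ℝ) < 4 * N + 6 := by positivity
  have hgpos : 0 < g := Real.sqrt_pos.mpr (by positivity)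
  have hg2 : g ^ 2 = 16 * π ^ 2 * ε / (4 * N + 6) :=
    Real.sq_sqrt (by positivity)
  refine ⟨hgpos, ?_, ?_⟩
  · have h3 : g ^ 3 = g * (16 * π ^ 2 * ε / (4 * N + 6)) := by
      rw [← hg2]; ring
    rw [h3]
    field_simp
    ring
  · set B : ℝ := 8 * N * g ^ 2 - 16 * π ^ 2 * ε with hB
    set C : ℝ := -(192 * N * g ^ 4) with hC
    have hCneg : C < 0 := by
      have : 0 < (N:ℝ) * g ^ 4 := by positivity
      rw [hC]; nlinarith
    have hiff : ∀ l : ℝ,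
        (-l * ε + (8 * N * g ^ 2 * (l - 24 * g ^ 2) + 3 * l ^ 2) / (16 * π ^ 2) = 0)
        ↔ 3 * l ^ 2 + B * l + C = 0 := by
      intro l
      have key : -l * ε + (8 * N * g ^ 2 * (l - 24 * g ^ 2) + 3 * l ^ 2) / (16 * π ^ 2)
          = (3 * l ^ 2 + B * l + C) / (16 * π ^ 2) := by
        rw [hB, hC]; field_simp; ring
      have hne : (16:ℝ) * π ^ 2 ≠ 0 := by positivity
      rw [key, div_eq_zero_iff]
      tauto
    set s : ℝ := Real.sqrt (B ^ 2 - 12 * C) with hs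
    have hdisc : 0 < B ^ 2 - 12 * C := by nlinarith [sq_nonneg B]
    have hs2 : s ^ 2 = B ^ 2 - 12 * C := Real.sq_sqrt (le_of_lt hdisc)
    have hBs : B < s := by
      have habs : |B| < s := by
        rw [hs, ← Real.sqrt_sq_eq_abs]
        exact Real.sqrt_lt_sqrt (sq_nonneg B) (by linarith)
      calc B ≤ |B| := le_abs_self B
        _ < s := habs
    set l₀ : ℝ := (-B + s) / 6 with hl₀
    have hl₀pos : 0 < l₀ := by rw [hl₀]; linarith
    have hq0 : 3 * l₀ ^ 2 + B * l₀ + C = 0 := by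
      rw [hl₀]; linear_combination (1/12 : ℝ) * hs2
    refine ⟨l₀, ⟨hl₀pos, (hiff l₀).mpr hq0⟩, ?_⟩
    rintro l ⟨hlpos, hl⟩
    rw [hiff l] at hl
    have h3B : 0 < 3 * l₀ + B := by nlinarith
    have hfac : (l - l₀) * (3 * (l + l₀) + B) = 0 := by
      linear_combination hl - hq0
    rcases mul_eq_zero.mp hfac with h | h
    · linarith
    · linarith
end

section
/- Let N : ℕ with N ≥ 1, let ε > 0 be real, and let g : Fin 4 → ℝ satisfy g i ≠ 0 for every i. If for every i : Fin 4 one has −(1/2)·(g i)·ε + (6·(g i)³ + N·(g i)·∑ j, (g j)²)/(32·π²) = 0, then (g i)² = 16·π²·ε / (4·N + 6) for every i : Fin 4; in particular (g i)² = (g j)² for all i, j. -/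
open Real

/-- At one loop, all fixed points of the general `M = 1` GNY-like model with four
independent nonzero Yukawa couplings (equation 3.1 of the paper) have
`g i² = 16π²ε/(4N + 6)` for every `i`; in particular all the `g i²` coincide. -/
theorem gny_one_loop_yukawa_fixed_points (N : ℕ) (hN : 1 ≤ N) (ε : ℝ) (hε : 0 < ε)
    (g : Fin 4 → ℝ) (hg : ∀ i, g i ≠ 0)
    (hfix : ∀ i : Fin 4,
      -(1 / 2) * g i * ε + (6 * (g i) ^ 3 + N * g i * ∑ j : Fin 4, (g j) ^ 2) / (32 * π ^ 2)
        = 0) :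
    (∀ i : Fin 4, (g i) ^ 2 = 16 * π ^ 2 * ε / (4 * N + 6)) ∧
    (∀ i j : Fin 4, (g i) ^ 2 = (g j) ^ 2) := by
  have hπ : (π : ℝ) ≠ 0 := Real.pi_ne_zero
  set S := ∑ j : Fin 4, (g j) ^ 2 with hS
  have key : ∀ i : Fin 4, 6 * (g i) ^ 2 + N * S = 16 * π ^ 2 * ε := by
    intro i
    have h := hfix i
    have hgi := hg i
    field_simp at h
    have h2 : g i * (12 * (g i) ^ 2 + 2 * N * S) = g i * (32 * π ^ 2 * ε) := by
      linear_combination h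
    have h3 := mul_left_cancel₀ hgi h2
    linarith
  have hsq : ∀ i : Fin 4, (g i) ^ 2 = (16 * π ^ 2 * ε - N * S) / 6 := by
    intro i; have := key i; linarith
  have hSval : S = 64 * π ^ 2 * ε / (4 * N + 6) := by
    have hSsum : S = g 0 ^ 2 + g 1 ^ 2 + g 2 ^ 2 + g 3 ^ 2 := by
      rw [hS, Fin.sum_univ_four]
    have hsum : 6 * S + 4 * (↑N * S) = 64 * π ^ 2 * ε := by
      have h0 := key 0; have h1 := key 1; have h2 := key 2; have h3 := key 3
      linarith
    have hden : (4 * (N:ℝ) + 6) ≠ 0 := by positivity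
    rw [eq_div_iff hden]
    linear_combination hsum
  have main : ∀ i : Fin 4, (g i) ^ 2 = 16 * π ^ 2 * ε / (4 * N + 6) := by
    intro i
    rw [hsq i, hSval]
    have hden : (4 * (N:ℝ) + 6) ≠ 0 := by positivity
    field_simp
    ring
  exact ⟨main, fun i j => by rw [main i, main j]⟩
end

section
/- Let n : ℕ. Let L_i and L_j be the 4×4 real matrices of left multiplication by the quaternions i and j on ℍ with respect to the basis (1, i, j, k), and set J₁ = Matrix.kroneckerMap (· * ·) (1 : Matrix (Fin n) (Fin n) ℝ) L_i and J₂ = Matrix.kroneckerMap (· * ·) (1 : Matrix (Fin n) (Fin n) ℝ) L_j. Then the subgroup {Q ∈ Matrix.orthogonalGroup (Fin n × Fin 4) ℝ : Q * J₁ = J₁ * Q and Q * J₂ = J₂ * Q} is isomorphic, as a group, to the unitary group unitary (Matrix (Fin n) (Fin n) ℍ) of the star ring of n×n quaternionic matrices (the compact symplectic group Sp(n)). -/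
open Matrix Quaternion

open scoped Quaternion

/-- The subgroup of the orthogonal group commuting with every matrix in `S`. -/
def commutantSubgroup (ι : Type*) [Fintype ι] [DecidableEq ι]
    (S : Set (Matrix ι ι ℝ)) : Subgroup (Matrix.orthogonalGroup ι ℝ) where
  carrier := {Q | ∀ D ∈ S, (Q : Matrix ι ι ℝ) * D = D * (Q : Matrix ι ι ℝ)}
  one_mem' := by intro D _; simp
  mul_mem' := by
    intro a b ha hb D hD
    simp only [Submonoid.coe_mul]
    rw [mul_assoc, hb D hD, ← mul_assoc, ha D hD, mul_assoc]
  inv_mem' := by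
    intro a ha D hD
    have h1 : star (a : Matrix ι ι ℝ) * a = 1 := Unitary.star_mul_self_of_mem a.2
    have h2 : (a : Matrix ι ι ℝ) * star (a : Matrix ι ι ℝ) = 1 := Unitary.mul_star_self_of_mem a.2
    have hcoe : ((a⁻¹ : Matrix.orthogonalGroup ι ℝ) : Matrix ι ι ℝ)
        = star (a : Matrix ι ι ℝ) := rfl
    show ((a⁻¹ : Matrix.orthogonalGroup ι ℝ) : Matrix ι ι ℝ) * D
        = D * ((a⁻¹ : Matrix.orthogonalGroup ι ℝ) : Matrix ι ι ℝ)
    rw [hcoe]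
    calc star (a : Matrix ι ι ℝ) * D
        = star (a : Matrix ι ι ℝ) * D * ((a : Matrix ι ι ℝ) * star (a : Matrix ι ι ℝ)) := by
          rw [h2, mul_one]
      _ = star (a : Matrix ι ι ℝ) * (D * (a : Matrix ι ι ℝ)) * star (a : Matrix ι ι ℝ) := by
          noncomm_ring
      _ = star (a : Matrix ι ι ℝ) * ((a : Matrix ι ι ℝ) * D) * star (a : Matrix ι ι ℝ) := by
          rw [ha D hD]
      _ = (star (a : Matrix ι ι ℝ) * (a : Matrix ι ι ℝ)) * (D * star (a : Matrix ι ι ℝ)) := by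
          noncomm_ring
      _ = D * star (a : Matrix ι ι ℝ) := by rw [h1, one_mul]

/-- The `4 × 4` real matrix of left multiplication by the quaternion `i` on `ℍ`,
with respect to the basis `(1, i, j, k)`. -/
noncomputable def Li : Matrix (Fin 4) (Fin 4) ℝ :=
  LinearMap.toMatrix (QuaternionAlgebra.basisOneIJK (-1 : ℝ) (0 : ℝ) (-1 : ℝ))
    (QuaternionAlgebra.basisOneIJK (-1 : ℝ) (0 : ℝ) (-1 : ℝ))
    (LinearMap.mulLeft ℝ (⟨0, 1, 0, 0⟩ : ℍ[ℝ]))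

/-- The `4 × 4` real matrix of left multiplication by the quaternion `j` on `ℍ`,
with respect to the basis `(1, i, j, k)`. -/
noncomputable def Lj : Matrix (Fin 4) (Fin 4) ℝ :=
  LinearMap.toMatrix (QuaternionAlgebra.basisOneIJK (-1 : ℝ) (0 : ℝ) (-1 : ℝ))
    (QuaternionAlgebra.basisOneIJK (-1 : ℝ) (0 : ℝ) (-1 : ℝ))
    (LinearMap.mulLeft ℝ (⟨0, 0, 1, 0⟩ : ℍ[ℝ]))


noncomputable section
namespace CQAux

/-- matrix of right multiplication by a quaternion in the basis (1,i,j,k) -/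
def rmul (c : ℍ[ℝ]) : Matrix (Fin 4) (Fin 4) ℝ :=
  !![c.re, -c.imI, -c.imJ, -c.imK;
     c.imI, c.re, c.imK, -c.imJ;
     c.imJ, -c.imK, c.re, c.imI;
     c.imK, c.imJ, -c.imI, c.re]

def Li' : Matrix (Fin 4) (Fin 4) ℝ := !![0,-1,0,0;1,0,0,0;0,0,0,-1;0,0,1,0]
def Lj' : Matrix (Fin 4) (Fin 4) ℝ := !![0,0,-1,0;0,0,0,1;1,0,0,0;0,-1,0,0]

theorem Li_eq : Li = Li' := by
  ext a b
  fin_cases a <;> fin_cases b <;>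
    simp [Li, Li', LinearMap.toMatrix_apply, LinearMap.mulLeft_apply,
      QuaternionAlgebra.basisOneIJK, Module.Basis.coe_ofEquivFun,
      QuaternionAlgebra.equivTuple, Function.update, Matrix.vecHead, Matrix.vecTail,
      QuaternionAlgebra.re_mul, QuaternionAlgebra.imI_mul, QuaternionAlgebra.imJ_mul,
      QuaternionAlgebra.imK_mul]

theorem Lj_eq : Lj = Lj' := by
  ext a b
  fin_cases a <;> fin_cases b <;>
    simp [Lj, Lj', LinearMap.toMatrix_apply, LinearMap.mulLeft_apply,
      QuaternionAlgebra.basisOneIJK, Module.Basis.coe_ofEquivFun,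
      QuaternionAlgebra.equivTuple, Function.update, Matrix.vecHead, Matrix.vecTail,
      QuaternionAlgebra.re_mul, QuaternionAlgebra.imI_mul, QuaternionAlgebra.imJ_mul,
      QuaternionAlgebra.imK_mul]

theorem rmul_one : rmul 1 = 1 := by
  ext a b; fin_cases a <;> fin_cases b <;>
    simp [Matrix.vecHead, Matrix.vecTail, rmul, Matrix.one_apply]

theorem rmul_zero : rmul 0 = 0 := by
  ext a b; fin_cases a <;> fin_cases b <;> simp [Matrix.vecHead, Matrix.vecTail, rmul]

theorem rmul_add (c d : ℍ[ℝ]) : rmul (c + d) = rmul c + rmul d := by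
  ext a b; fin_cases a <;> fin_cases b <;>
    simp [Matrix.vecHead, Matrix.vecTail, rmul] <;> ring

def rmulHom : ℍ[ℝ] →+ Matrix (Fin 4) (Fin 4) ℝ where
  toFun := rmul
  map_zero' := rmul_zero
  map_add' := rmul_add

theorem rmul_sum {ι : Type*} (s : Finset ι) (f : ι → ℍ[ℝ]) :
    rmul (∑ i ∈ s, f i) = ∑ i ∈ s, rmul (f i) :=
  map_sum rmulHom f s

theorem rmul_mul (c d : ℍ[ℝ]) : rmul (c * d) = rmul d * rmul c := by
  ext a b; fin_cases a <;> fin_cases b <;>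
    simp [Matrix.vecHead, Matrix.vecTail, rmul, Matrix.mul_apply, Fin.sum_univ_four,
      Quaternion.re_mul, Quaternion.imI_mul, Quaternion.imJ_mul, Quaternion.imK_mul] <;> ring

theorem rmul_star (c : ℍ[ℝ]) : rmul (star c) = (rmul c)ᵀ := by
  ext a b; fin_cases a <;> fin_cases b <;> simp [Matrix.vecHead, Matrix.vecTail, rmul]

theorem rmul_comm_Li (c : ℍ[ℝ]) : rmul c * Li' = Li' * rmul c := by
  ext a b; fin_cases a <;> fin_cases b <;>
    simp [Matrix.vecHead, Matrix.vecTail, rmul, Li', Matrix.mul_apply, Fin.sum_univ_four]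

theorem rmul_comm_Lj (c : ℍ[ℝ]) : rmul c * Lj' = Lj' * rmul c := by
  ext a b; fin_cases a <;> fin_cases b <;>
    simp [Matrix.vecHead, Matrix.vecTail, rmul, Lj', Matrix.mul_apply, Fin.sum_univ_four]

theorem rmul_inj : Function.Injective rmul := by
  intro c d h
  ext
  · exact congrFun (congrFun h 0) 0
  · exact congrFun (congrFun h 1) 0
  · exact congrFun (congrFun h 2) 0
  · exact congrFun (congrFun h 3) 0

theorem eq_rmul_of_comm (M : Matrix (Fin 4) (Fin 4) ℝ)
    (h1 : M * Li' = Li' * M) (h2 : M * Lj' = Lj' * M) :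
    M = rmul ⟨M 0 0, M 1 0, M 2 0, M 3 0⟩ := by
  have k1 : ∀ a b : Fin 4, (M * Li') a b = (Li' * M) a b := fun a b => by rw [h1]
  have k2 : ∀ a b : Fin 4, (M * Lj') a b = (Lj' * M) a b := fun a b => by rw [h2]
  have e1 := k1 0 0
  have e2 := k1 1 0
  have e3 := k1 2 0
  have e4 := k1 3 0
  have e5 := k2 0 0
  have e6 := k2 1 0
  have e7 := k2 2 0
  have e8 := k2 3 0
  have e9 := k1 0 2
  have e10 := k1 1 2
  have e11 := k1 2 2
  have e12 := k1 3 2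
  simp [Li', Lj', Matrix.mul_apply, Fin.sum_univ_four, Matrix.vecHead, Matrix.vecTail]
    at e1 e2 e3 e4 e5 e6 e7 e8 e9 e10 e11 e12
  ext a b
  fin_cases a <;> fin_cases b <;>
    simp [rmul, Matrix.vecHead, Matrix.vecTail] <;> linarith

variable {n : ℕ}

/-- real matrix of right multiplication by a quaternionic matrix on ℍ^n = ℝ^{4n} -/
def toQ (A : Matrix (Fin n) (Fin n) ℍ[ℝ]) : Matrix (Fin n × Fin 4) (Fin n × Fin 4) ℝ :=
  fun x y => rmul (A y.1 x.1) x.2 y.2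

theorem toQ_one : toQ (1 : Matrix (Fin n) (Fin n) ℍ[ℝ]) = 1 := by
  ext ⟨p, a⟩ ⟨q, b⟩
  show rmul ((1 : Matrix (Fin n) (Fin n) ℍ[ℝ]) q p) a b = _
  rcases eq_or_ne q p with h | h
  · subst h
    simp [Matrix.one_apply, rmul_one, Prod.ext_iff]
  · simp [Matrix.one_apply, h, Ne.symm h, rmul_zero, Prod.ext_iff]

theorem toQ_mul (A B : Matrix (Fin n) (Fin n) ℍ[ℝ]) : toQ (A * B) = toQ B * toQ A := by
  ext ⟨p, a⟩ ⟨q, b⟩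
  show rmul ((A * B) q p) a b
      = ∑ x : Fin n × Fin 4, toQ B (p, a) x * toQ A x (q, b)
  rw [Matrix.mul_apply, rmul_sum, Matrix.sum_apply, Fintype.sum_prod_type]
  refine Finset.sum_congr rfl fun r _ => ?_
  rw [rmul_mul, Matrix.mul_apply]
  rfl

theorem toQ_star (A : Matrix (Fin n) (Fin n) ℍ[ℝ]) : toQ (star A) = star (toQ A) := by
  ext ⟨p, a⟩ ⟨q, b⟩
  show rmul (star (A p q)) a b = star (toQ A (q, b) (p, a))
  rw [star_trivial (toQ A (q, b) (p, a)), rmul_star]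
  rfl

theorem toQ_inj : Function.Injective (toQ (n := n)) := by
  intro A B h
  refine Matrix.ext fun p q => ?_
  apply rmul_inj
  ext a b
  exact congrFun (congrFun h (q, a)) (p, b)

theorem toQ_comm (A : Matrix (Fin n) (Fin n) ℍ[ℝ]) (L : Matrix (Fin 4) (Fin 4) ℝ)
    (hL : ∀ c, rmul c * L = L * rmul c) :
    toQ A * Matrix.kroneckerMap (· * ·) (1 : Matrix (Fin n) (Fin n) ℝ) L
      = Matrix.kroneckerMap (· * ·) (1 : Matrix (Fin n) (Fin n) ℝ) L * toQ A := by
  ext ⟨p, a⟩ ⟨q, b⟩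
  have key := congrFun (congrFun (hL (A q p)) a) b
  rw [Matrix.mul_apply, Matrix.mul_apply] at key
  simp only [Matrix.mul_apply, Fintype.sum_prod_type, Matrix.kroneckerMap_apply, toQ,
    Matrix.one_apply, ite_mul, mul_ite, one_mul, zero_mul, mul_one, mul_zero,
    Finset.sum_ite_irrel, Finset.sum_const_zero,
    Finset.sum_ite_eq, Finset.sum_ite_eq', Finset.mem_univ, if_true]
  exact key

theorem block_comm {Q : Matrix (Fin n × Fin 4) (Fin n × Fin 4) ℝ}
    {L : Matrix (Fin 4) (Fin 4) ℝ}
    (h : Q * Matrix.kroneckerMap (· * ·) (1 : Matrix (Fin n) (Fin n) ℝ) L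
      = Matrix.kroneckerMap (· * ·) (1 : Matrix (Fin n) (Fin n) ℝ) L * Q) (p q : Fin n) :
    (Matrix.of fun a b => Q (p, a) (q, b)) * L = L * Matrix.of fun a b => Q (p, a) (q, b) := by
  ext a b
  have key := congrFun (congrFun h (p, a)) (q, b)
  rw [Matrix.mul_apply, Matrix.mul_apply] at key
  simp only [Fintype.sum_prod_type, Matrix.kroneckerMap_apply, Matrix.one_apply,
    ite_mul, mul_ite, one_mul, zero_mul, mul_one, mul_zero,
    Finset.sum_ite_irrel, Finset.sum_const_zero,
    Finset.sum_ite_eq, Finset.sum_ite_eq', Finset.mem_univ, if_true] at key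
  rw [Matrix.mul_apply, Matrix.mul_apply]
  exact key

theorem psi_mem_orth (U : unitary (Matrix (Fin n) (Fin n) ℍ[ℝ])) :
    toQ (star U.val) ∈ Matrix.orthogonalGroup (Fin n × Fin 4) ℝ := by
  constructor
  · rw [← toQ_star, star_star, ← toQ_mul, Unitary.star_mul_self_of_mem U.2, toQ_one]
  · rw [← toQ_star, star_star, ← toQ_mul, Unitary.mul_star_self_of_mem U.2, toQ_one]

theorem psi_mem_comm (U : unitary (Matrix (Fin n) (Fin n) ℍ[ℝ])) :
    ∀ D ∈ ({Matrix.kroneckerMap (· * ·) (1 : Matrix (Fin n) (Fin n) ℝ) Li,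
       Matrix.kroneckerMap (· * ·) (1 : Matrix (Fin n) (Fin n) ℝ) Lj} :
         Set (Matrix (Fin n × Fin 4) (Fin n × Fin 4) ℝ)),
      toQ (star U.val) * D
        = D * toQ (star U.val) := by
  rintro D (rfl | rfl)
  · rw [Li_eq]; exact toQ_comm _ _ rmul_comm_Li
  · rw [Lj_eq]; exact toQ_comm _ _ rmul_comm_Lj

/-- The homomorphism from `Sp(n)` to the commutant subgroup. -/
def psi (n : ℕ) : unitary (Matrix (Fin n) (Fin n) ℍ[ℝ]) →*
    commutantSubgroup (Fin n × Fin 4)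
      {Matrix.kroneckerMap (· * ·) (1 : Matrix (Fin n) (Fin n) ℝ) Li,
       Matrix.kroneckerMap (· * ·) (1 : Matrix (Fin n) (Fin n) ℝ) Lj} where
  toFun U := ⟨⟨toQ (star U.val), psi_mem_orth U⟩, psi_mem_comm U⟩
  map_one' := by
    refine Subtype.ext (Subtype.ext ?_)
    show toQ (star (1 : unitary (Matrix (Fin n) (Fin n) ℍ[ℝ])).val) = 1
    rw [OneMemClass.coe_one, star_one, toQ_one]
  map_mul' U V := by
    refine Subtype.ext (Subtype.ext ?_)
    show toQ (star (U * V).val) = _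
    rw [MulMemClass.coe_mul, StarMul.star_mul, toQ_mul]
    rfl

end CQAux
end

open CQAux in
/-- The commutant subgroup of Theorem 2.8 of the paper for a quaternionic-type module
of multiplicity `n`: the real orthogonal matrices commuting with the quaternionic
structure `J₁ = 1ₙ ⊗ L_i`, `J₂ = 1ₙ ⊗ L_j` on `ℝ^{4n}` form a group isomorphic to
the quaternionic unitary group `Sp(n) = unitary (Matrix (Fin n) (Fin n) ℍ)`. -/
theorem commutant_quaternionic_structure (n : ℕ) :
    Nonempty
      ((commutantSubgroup (Fin n × Fin 4)
          {Matrix.kroneckerMap (· * ·) (1 : Matrix (Fin n) (Fin n) ℝ) Li,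
           Matrix.kroneckerMap (· * ·) (1 : Matrix (Fin n) (Fin n) ℝ) Lj}) ≃*
        unitary (Matrix (Fin n) (Fin n) ℍ[ℝ])) := by
  refine ⟨(MulEquiv.ofBijective (psi n) ⟨?_, ?_⟩).symm⟩
  · intro U V h
    have h2 : toQ (star U.val)
        = toQ (star V.val) :=
      congrArg (fun x => x.1.1) h
    exact Subtype.ext (star_injective (toQ_inj h2))
  · rintro ⟨⟨Q, hQ⟩, hcomm⟩
    have hc1 := hcomm _ (Set.mem_insert _ _)
    have hc2 := hcomm _ (Set.mem_insert_of_mem _ rfl)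
    rw [Li_eq] at hc1
    rw [Lj_eq] at hc2
    have hb1 := fun p q => block_comm hc1 p q
    have hb2 := fun p q => block_comm hc2 p q
    set c : Matrix (Fin n) (Fin n) ℍ[ℝ] :=
      fun p q => ⟨Q (p, 0) (q, 0), Q (p, 1) (q, 0), Q (p, 2) (q, 0), Q (p, 3) (q, 0)⟩ with hc
    have hblock : ∀ p q, (Matrix.of fun a b => Q (p, a) (q, b)) = rmul (c p q) := fun p q =>
      eq_rmul_of_comm _ (hb1 p q) (hb2 p q)
    set U : Matrix (Fin n) (Fin n) ℍ[ℝ] := fun p q => star (c p q) with hU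
    have hstarU : star U = fun q p => c p q := by
      refine funext fun q => funext fun p => ?_
      show star (U p q) = c p q
      exact star_star _
    have hQeq : Q = toQ (star U) := by
      ext ⟨p, a⟩ ⟨q, b⟩
      show Q (p, a) (q, b) = rmul ((star U) q p) a b
      rw [hstarU]
      exact (congrFun (congrFun (hblock p q) a) b)
    have hQ1 : Q * star Q = 1 := hQ.2
    have hQ2 : star Q * Q = 1 := hQ.1
    rw [hQeq, ← toQ_star, star_star, ← toQ_mul] at hQ1 hQ2
    rw [← toQ_one] at hQ1 hQ2
    have hu1 : U * star U = 1 := toQ_inj hQ1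
    have hu2 : star U * U = 1 := toQ_inj hQ2
    refine ⟨⟨U, hu2, hu1⟩, ?_⟩
    refine Subtype.ext (Subtype.ext ?_)
    show toQ (star U) = Q
    exact hQeq.symm
end

section
/- Let m : ℤ with m ≠ 0. If W is an ℝ-linear subspace of (Fin 2 → ℝ) such that (Rot (m·θ)).mulVec v ∈ W for every v ∈ W and every θ : ℝ, then W = ⊥ or W = ⊤. -/
open Matrix Real

/-- The `2 × 2` rotation matrix by angle `α`. -/
noncomputable def Rot (α : ℝ) : Matrix (Fin 2) (Fin 2) ℝ :=
  !![Real.cos α, -Real.sin α; Real.sin α, Real.cos α]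

/-- The appendix claim of the paper that for every nonzero frequency `m` the
two-dimensional real representation `2_m` of `Spin(2)`, `θ ↦ Rot (mθ)`, is irreducible
over `ℝ`: any invariant subspace is trivial. -/
theorem rot_rep_irreducible (m : ℤ) (hm : m ≠ 0)
    (W : Submodule ℝ (Fin 2 → ℝ))
    (hW : ∀ v ∈ W, ∀ θ : ℝ, (Rot ((m : ℝ) * θ)).mulVec v ∈ W) :
    W = ⊥ ∨ W = ⊤ := by
  by_cases hb : W = ⊥
  · exact Or.inl hb
  right
  obtain ⟨v, hvW, hv0⟩ := Submodule.exists_mem_ne_zero_of_ne_bot hb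
  have hm' : (m : ℝ) ≠ 0 := Int.cast_ne_zero.mpr hm
  have hθ : (m : ℝ) * (π / (2 * m)) = π / 2 := by field_simp
  have hw := hW v hvW (π / (2 * m))
  rw [hθ] at hw
  have hRot : Rot (π / 2) = !![0, -1; 1, 0] := by
    simp [Rot, Real.cos_pi_div_two, Real.sin_pi_div_two]
  rw [hRot] at hw
  set a := v 0
  set b := v 1
  have hweq : (!![0, -1; 1, 0] : Matrix (Fin 2) (Fin 2) ℝ).mulVec v = ![-b, a] := by
    funext i
    fin_cases i <;> simp [mulVec, dotProduct, Fin.sum_univ_two, a, b]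
  rw [hweq] at hw
  have hs : a ^ 2 + b ^ 2 ≠ 0 := by
    intro h
    apply hv0
    have ha : a = 0 := by nlinarith [sq_nonneg a, sq_nonneg b]
    have hb' : b = 0 := by nlinarith [sq_nonneg a, sq_nonneg b]
    funext i; fin_cases i <;> simpa [a, b] using (by assumption : _)
  set s := a ^ 2 + b ^ 2
  have he0 : (![1, 0] : Fin 2 → ℝ) ∈ W := by
    have : (a / s) • v + (-b / s) • ![-b, a] = ![1, 0] := by
      funext i; fin_cases i <;> simp [a, b] <;> field_simp <;> ring
    rw [← this]
    exact W.add_mem (W.smul_mem _ hvW) (W.smul_mem _ hw)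
  have he1 : (![0, 1] : Fin 2 → ℝ) ∈ W := by
    have : (b / s) • v + (a / s) • ![-b, a] = ![0, 1] := by
      funext i; fin_cases i <;> simp [a, b] <;> field_simp <;> ring
    rw [← this]
    exact W.add_mem (W.smul_mem _ hvW) (W.smul_mem _ hw)
  rw [eq_top_iff]
  intro x _
  have hx : x = x 0 • ![1, 0] + x 1 • ![0, 1] := by
    funext i; fin_cases i <;> simp
  rw [hx]
  exact W.add_mem (W.smul_mem _ he0) (W.smul_mem _ he1)
end

section
/- Let m n : ℤ. If there exists an invertible matrix P ∈ Matrix (Fin 2) (Fin 2) ℝ such that P * Rot (m·θ) = Rot (n·θ) * P for every θ : ℝ, then m = n or m = −n. -/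
open Matrix Real

lemma hasDerivAt_mul (c θ : ℝ) : HasDerivAt (fun y : ℝ => c * y) c θ := by
  simpa using (hasDerivAt_id θ).const_mul c

lemma deriv_cos_mul (c : ℝ) : deriv (fun θ : ℝ => Real.cos (c * θ)) =
    fun θ : ℝ => -(c * Real.sin (c * θ)) := by
  funext θ
  have h := (hasDerivAt_mul c θ).cos
  rw [h.deriv]; ring

lemma deriv_sin_mul (c : ℝ) (θ : ℝ) : deriv (fun θ : ℝ => -(c * Real.sin (c * θ))) θ =
    -(c * (c * Real.cos (c * θ))) := by
  have h2 : HasDerivAt (fun θ : ℝ => -(c * Real.sin (c * θ)))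
      (-(c * (Real.cos (c * θ) * c))) θ := (((hasDerivAt_mul c θ).sin).const_mul c).neg
  rw [h2.deriv]; ring

lemma cos_mul_eq (m n : ℝ) (h : ∀ θ : ℝ, Real.cos (m * θ) = Real.cos (n * θ)) :
    m ^ 2 = n ^ 2 := by
  have hf : (fun θ : ℝ => Real.cos (m * θ)) = fun θ : ℝ => Real.cos (n * θ) := funext h
  have hd : (fun θ : ℝ => -(m * Real.sin (m * θ))) = fun θ : ℝ => -(n * Real.sin (n * θ)) := by
    rw [← deriv_cos_mul, ← deriv_cos_mul, hf]
  have h2 : -(m * (m * Real.cos (m * 0))) = -(n * (n * Real.cos (n * 0))) := by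
    rw [← deriv_sin_mul, ← deriv_sin_mul, hd]
  simp [Real.cos_zero] at h2
  nlinarith [h2]

/-- The appendix claim of the paper that the two-dimensional real representations `2_m`
of `Spin(2)` with distinct positive frequencies are pairwise inequivalent: an invertible
intertwiner between the rotation families of frequencies `m` and `n` can exist only
when `m = ±n`. -/
theorem rot_rep_intertwiner (m n : ℤ)
    (h : ∃ P : Matrix (Fin 2) (Fin 2) ℝ, IsUnit P ∧
      ∀ θ : ℝ, P * Rot ((m : ℝ) * θ) = Rot ((n : ℝ) * θ) * P) :
    m = n ∨ m = -n := by
  obtain ⟨P, hP, hcomm⟩ := h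
  have hdet : IsUnit P.det := (Matrix.isUnit_iff_isUnit_det P).mp hP
  have hinv : P⁻¹ * P = 1 := Matrix.nonsing_inv_mul P hdet
  have hinv' : P * P⁻¹ = 1 := Matrix.mul_nonsing_inv P hdet
  have hcos : ∀ θ : ℝ, Real.cos ((m : ℝ) * θ) = Real.cos ((n : ℝ) * θ) := by
    intro θ
    have h1 : Rot ((n : ℝ) * θ) = P * Rot ((m : ℝ) * θ) * P⁻¹ := by
      rw [hcomm θ, Matrix.mul_assoc, hinv', Matrix.mul_one]
    have htr : trace (Rot ((n : ℝ) * θ)) = trace (Rot ((m : ℝ) * θ)) := by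
      rw [h1, trace_mul_comm, ← Matrix.mul_assoc, hinv, Matrix.one_mul]
    have := htr.symm
    simp [Rot, Matrix.trace_fin_two] at this
    linarith [this]
  have hsq : ((m : ℝ)) ^ 2 = ((n : ℝ)) ^ 2 := cos_mul_eq _ _ hcos
  have hz : m ^ 2 = n ^ 2 := by exact_mod_cast hsq
  have h0 : (m - n) * (m + n) = 0 := by linarith [hz, sq_abs m]; 
  rcases mul_eq_zero.mp h0 with h1 | h1
  · left; omega
  · right; omega
end
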